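/- arXiv:1503.05573 — 3 statements merged into one kernel-verified Lean document; each statement's English description precedes it below -/
import Mathlib

section
/- Let K be a field (e.g. ℂ), V a finite-dimensional K-vector space, and k ≥ 1. Let U and W be k-dimensional linear subspaces of V with U ∩ W = 0. Suppose x_0, x_1, ..., x_k is a chain of k-dimensional linear subspaces of V with x_0 = U, x_k = W, such that consecutive members lie on a common projective line in the Grassmannian, i.e. dim(x_i ∩ x_{i+1}) ≥ k − 1 for all 0 ≤ i ≤ k − 1. Then every x_i is contained in U + W. (Hence every path of length k in the Grassmannian G(k, n) connecting two points u, v corresponding to subspaces U, V with U ∩ V = 0 is contained in the sub-Grassmannian G(k, U ⊕ V).) -/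
/-- If `x_0 = U, x_1, ..., x_k = W` is a chain of `k`-dimensional subspaces
with `dim(x_i ∩ x_{i+1}) ≥ k - 1` for consecutive members, and `U ∩ W = 0`, then every
`x_i` is contained in `U + W`. -/
theorem stmt2 (K : Type*) [Field K] (V : Type*) [AddCommGroup V] [Module K V]
    [FiniteDimensional K V] (k : ℕ) (hk : 1 ≤ k)
    (U W : Submodule K V)
    (hU : Module.finrank K U = k) (hW : Module.finrank K W = k)
    (hUW : U ⊓ W = ⊥)
    (x : Fin (k + 1) → Submodule K V)
    (hx0 : x 0 = U) (hxk : x (Fin.last k) = W)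
    (hdim : ∀ i, Module.finrank K (x i) = k)
    (hchain : ∀ i : Fin k, k - 1 ≤ Module.finrank K ↥(x i.castSucc ⊓ x i.succ)) :
    ∀ i, x i ≤ U ⊔ W := by
  -- extend x to a function on ℕ
  set y : ℕ → Submodule K V := fun n => x ⟨min n k, Nat.lt_succ_of_le (min_le_right _ _)⟩ with hy
  have hyx : ∀ i : Fin (k+1), y i = x i := by
    intro i
    simp only [hy]
    congr 1
    exact Fin.ext (by simpa using Nat.min_eq_left (Nat.lt_succ_iff.mp i.isLt))
  have hydim : ∀ n, Module.finrank K (y n) = k := fun n => hdim _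
  have hychain : ∀ n, k - 1 ≤ Module.finrank K ↥(y n ⊓ y (n+1)) := by
    intro n
    by_cases hn : n < k
    · have := hchain ⟨n, hn⟩
      have e1 : y n = x (Fin.castSucc ⟨n, hn⟩) := by
        simp only [hy]; congr 1; exact Fin.ext (by simp [Nat.min_eq_left hn.le])
      have e2 : y (n+1) = x (Fin.succ ⟨n, hn⟩) := by
        simp only [hy]; congr 1; exact Fin.ext (by simp [Nat.min_eq_left hn])
      rw [e1, e2]; exact this
    · have e : y (n+1) = y n := by
        simp only [hy]; congr 2
        omega
      rw [e, inf_idem, hydim]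
      omega
  -- partial suprema
  set g : ℕ → Submodule K V := fun n => Nat.rec (y 0) (fun m gm => gm ⊔ y (m+1)) n with hg
  have hgsucc : ∀ n, g (n+1) = g n ⊔ y (n+1) := fun n => rfl
  have hyg : ∀ n, y n ≤ g n := by
    intro n
    cases n with
    | zero => exact le_refl _
    | succ m => rw [hgsucc]; exact le_sup_right
  have hgmono : Monotone g := by
    apply monotone_nat_of_le_succ
    intro n; rw [hgsucc]; exact le_sup_left
  have hgdim : ∀ n, Module.finrank K (g n) ≤ k + n := by
    intro n
    induction n with
    | zero => exact (hydim 0).le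
    | succ m ih =>
      have key := Submodule.finrank_sup_add_finrank_inf_eq (g m) (y (m+1))
      have hle : Module.finrank K ↥(y m ⊓ y (m+1)) ≤ Module.finrank K ↥(g m ⊓ y (m+1)) :=
        Submodule.finrank_mono (inf_le_inf_right _ (hyg m))
      have hc := hychain m
      rw [hgsucc]
      rw [hydim (m+1)] at key
      omega
  -- U ⊔ W ≤ g k and dims force equality
  have hUle : U ≤ g k := by
    rw [← hx0, ← hyx 0]
    exact le_trans (hyg 0) (hgmono (Nat.zero_le k))
  have hWle : W ≤ g k := by
    have : y k = W := by rw [← hxk, ← hyx (Fin.last k)]; rfl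
    rw [← this]; exact hyg k
  have hsupdim : Module.finrank K ↥(U ⊔ W) = k + k := by
    have := Submodule.finrank_sup_add_finrank_inf_eq U W
    rw [hUW, hU, hW] at this
    simpa using this
  have heq : U ⊔ W = g k := by
    apply Submodule.eq_of_le_of_finrank_le (sup_le hUle hWle)
    rw [hsupdim]; exact hgdim k
  intro i
  rw [← hyx i, heq]
  exact le_trans (hyg i) (hgmono (Nat.lt_succ_iff.mp i.isLt))
end

section
/- Let K be a field (e.g. ℂ), V a finite-dimensional K-vector space, and k ≥ 1. Let U and W be k-dimensional linear subspaces of V with U ∩ W = 0, and let x_0, x_1, ..., x_k be a chain of k-dimensional linear subspaces of V with x_0 = U, x_k = W, and dim(x_i ∩ x_{i+1}) ≥ k − 1 for all 0 ≤ i ≤ k − 1. Then for every 0 ≤ i ≤ k one has dim(x_i ∩ U) = k − i and dim(x_i ∩ W) = i, and moreover x_i = (x_i ∩ U) + (x_i ∩ W). -/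
/-- Key step: if `Y`, `Z` have rank `k` and `dim (Y ⊓ Z) ≥ k - 1`, then for any `S`,
`dim (Y ⊓ S) ≤ dim (Z ⊓ S) + 1`. -/
theorem stmt3_step (K : Type*) [Field K] (V : Type*) [AddCommGroup V] [Module K V]
    [FiniteDimensional K V] (k : ℕ) (Y Z S : Submodule K V)
    (hY : Module.finrank K Y = k)
    (h : k - 1 ≤ Module.finrank K ↥(Y ⊓ Z)) :
    Module.finrank K ↥(Y ⊓ S) ≤ Module.finrank K ↥(Z ⊓ S) + 1 := by
  have h1 : (Y ⊓ S) ⊓ (Y ⊓ Z) ≤ Z ⊓ S :=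
    le_inf (le_trans inf_le_right inf_le_right) (le_trans inf_le_left inf_le_right)
  have h2 := Submodule.finrank_sup_add_finrank_inf_eq (Y ⊓ S) (Y ⊓ Z)
  have h3 : (Y ⊓ S) ⊔ (Y ⊓ Z) ≤ Y := sup_le inf_le_left inf_le_left
  have h4 := Submodule.finrank_mono h3
  have h5 := Submodule.finrank_mono h1
  omega

/-- For a chain `x_0 = U, ..., x_k = W` of `k`-dimensional subspaces with
`dim(x_i ∩ x_{i+1}) ≥ k - 1` and `U ∩ W = 0`, one has `dim(x_i ∩ U) = k - i`,
`dim(x_i ∩ W) = i`, and `x_i = (x_i ∩ U) + (x_i ∩ W)` for all `i`. -/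
theorem stmt3 (K : Type*) [Field K] (V : Type*) [AddCommGroup V] [Module K V]
    [FiniteDimensional K V] (k : ℕ) (hk : 1 ≤ k)
    (U W : Submodule K V)
    (hU : Module.finrank K U = k) (hW : Module.finrank K W = k)
    (hUW : U ⊓ W = ⊥)
    (x : Fin (k + 1) → Submodule K V)
    (hx0 : x 0 = U) (hxk : x (Fin.last k) = W)
    (hdim : ∀ i, Module.finrank K (x i) = k)
    (hchain : ∀ i : Fin k, k - 1 ≤ Module.finrank K ↥(x i.castSucc ⊓ x i.succ)) :
    ∀ i : Fin (k + 1),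
      Module.finrank K ↥(x i ⊓ U) = k - i.1 ∧
      Module.finrank K ↥(x i ⊓ W) = i.1 ∧
      x i = (x i ⊓ U) ⊔ (x i ⊓ W) := by
  -- Forward bound : dim (x_n ⊓ U) ≥ k - n
  have hUbd : ∀ n : ℕ, ∀ h : n < k + 1, k - n ≤ Module.finrank K ↥(x ⟨n, h⟩ ⊓ U) := by
    intro n
    induction n with
    | zero =>
      intro h
      have : x ⟨0, h⟩ = U := hx0
      rw [this, inf_idem, hU]; omega
    | succ n ih =>
      intro h
      have hn : n < k + 1 := by omega
      have hnk : n < k := by omega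
      have hstep := stmt3_step K V k (x ⟨n, hn⟩) (x ⟨n+1, h⟩) U (hdim _)
        (by have := hchain ⟨n, hnk⟩
            simpa [Fin.castSucc, Fin.succ, Fin.castAdd, Fin.castLE] using this)
      have := ih hn
      omega
  -- Backward bound : dim (x_{k-m} ⊓ W) ≥ k - m
  have hWbd : ∀ m : ℕ, ∀ h : m ≤ k, k - m ≤
      Module.finrank K ↥(x ⟨k - m, by omega⟩ ⊓ W) := by
    intro m
    induction m with
    | zero =>
      intro h
      have hl : (⟨k - 0, by omega⟩ : Fin (k+1)) = Fin.last k := by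
        ext; simp
      rw [hl, hxk, inf_idem, hW]; omega
    | succ m ih =>
      intro h
      have hm : m ≤ k := by omega
      have hlt : k - (m+1) < k := by omega
      have hstep := stmt3_step K V k (x ⟨k - m, by omega⟩) (x ⟨k - (m+1), by omega⟩) W
        (hdim _)
        (by have := hchain ⟨k - (m+1), hlt⟩
            rw [inf_comm]
            have e1 : (Fin.castSucc ⟨k - (m+1), hlt⟩ : Fin (k+1)) = ⟨k - (m+1), by omega⟩ := rfl
            have e2 : (Fin.succ ⟨k - (m+1), hlt⟩ : Fin (k+1)) = ⟨k - m, by omega⟩ := by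
              ext; simp; omega
            rw [e1, e2] at this
            exact this)
      have := ih hm
      omega
  intro i
  have hiU : k - i.1 ≤ Module.finrank K ↥(x i ⊓ U) := by
    have := hUbd i.1 i.2
    simpa using this
  have hiW : i.1 ≤ Module.finrank K ↥(x i ⊓ W) := by
    have h1 : i.1 ≤ k := by omega
    have := hWbd (k - i.1) (by omega)
    have e : (⟨k - (k - i.1), by omega⟩ : Fin (k+1)) = i := by
      ext; simp; omega
    rw [e] at this
    omega
  -- The two pieces intersect trivially
  have hbot : (x i ⊓ U) ⊓ (x i ⊓ W) = ⊥ := by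
    rw [← le_bot_iff, ← hUW]
    exact le_inf (le_trans inf_le_left inf_le_right) (le_trans inf_le_right inf_le_right)
  have h2 := Submodule.finrank_sup_add_finrank_inf_eq (x i ⊓ U) (x i ⊓ W)
  rw [hbot] at h2
  simp only [finrank_bot] at h2
  have h3 : (x i ⊓ U) ⊔ (x i ⊓ W) ≤ x i := sup_le inf_le_left inf_le_left
  have h4 := Submodule.finrank_mono h3
  have hd := hdim i
  have h5 : i.1 ≤ k := by omega
  refine ⟨by omega, by omega, ?_⟩
  exact (Submodule.eq_of_le_of_finrank_eq h3 (by omega)).symm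
end

section
/- Let K be a field (e.g. ℂ), V a finite-dimensional K-vector space, and k ≥ 1. For any two k-dimensional linear subspaces U and W of V there exists a chain x_0, x_1, ..., x_k of k-dimensional linear subspaces of V with x_0 = U, x_k = W, dim(x_i ∩ x_{i+1}) ≥ k − 1 for all 0 ≤ i ≤ k − 1, and x_i ⊆ U + W for every i. (Hence any two points of the Grassmannian G(k, n) are connected by a path of length k, and such a path can be chosen entirely inside the sub-Grassmannian G(k, U + W).) -/
open Module Submodule

private lemma sup_span_singleton_finrank {K V : Type*} [Field K] [AddCommGroup V] [Module K V]
    [FiniteDimensional K V] (p : Submodule K V) {v : V} (hv : v ∉ p) :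
    Module.finrank K ↥(p ⊔ (K ∙ v)) = Module.finrank K p + 1 := by
  have hv0 : v ≠ 0 := fun h => hv (h ▸ p.zero_mem)
  have hd : Disjoint p (K ∙ v) := (Submodule.disjoint_span_singleton' hv0).mpr hv
  have h := Submodule.finrank_sup_add_finrank_inf_eq p (K ∙ v)
  rw [hd.eq_bot, finrank_bot, finrank_span_singleton hv0] at h
  omega

/-- An intermediate subspace of any prescribed dimension exists. -/
private lemma exists_between_finrank {K V : Type*} [Field K] [AddCommGroup V] [Module K V]
    [FiniteDimensional K V] (c : ℕ) :
    ∀ (p q : Submodule K V), p ≤ q → Module.finrank K p + c ≤ Module.finrank K q →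
      ∃ r : Submodule K V, p ≤ r ∧ r ≤ q ∧ Module.finrank K r = Module.finrank K p + c := by
  induction c with
  | zero => exact fun p q hpq _ => ⟨p, le_rfl, hpq, by simp⟩
  | succ c ih =>
    intro p q hpq hle
    have hne : p ≠ q := by
      rintro rfl
      omega
    obtain ⟨v, hvq, hvp⟩ := SetLike.exists_of_lt (lt_of_le_of_ne hpq hne)
    have hfr := sup_span_singleton_finrank p hvp
    obtain ⟨r, h1, h2, h3⟩ := ih (p ⊔ (K ∙ v)) q
      (sup_le hpq ((span_singleton_le_iff_mem v q).mpr hvq)) (by omega)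
    exact ⟨r, le_trans le_sup_left h1, h2, by omega⟩

private lemma chain_aux {K V : Type*} [Field K] [AddCommGroup V] [Module K V]
    [FiniteDimensional K V] (k : ℕ) (hk : 1 ≤ k) (n : ℕ) :
    ∀ (U W : Submodule K V), Module.finrank K U = k → Module.finrank K W = k →
      k ≤ Module.finrank K ↥(U ⊓ W) + n →
      ∃ x : Fin (n + 1) → Submodule K V,
        x 0 = U ∧ x (Fin.last n) = W ∧
        (∀ i, Module.finrank K (x i) = k) ∧
        (∀ i : Fin n, k - 1 ≤ Module.finrank K ↥(x i.castSucc ⊓ x i.succ)) ∧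
        ∀ i, x i ≤ U ⊔ W := by
  induction n with
  | zero =>
    intro U W hU hW hd
    have h1 : Module.finrank K ↥(U ⊓ W) ≤ k := hU ▸ Submodule.finrank_mono inf_le_left
    have hUW : U = W := by
      have e1 : U ⊓ W = U := Submodule.eq_of_le_of_finrank_eq inf_le_left (by omega)
      have e2 : U ⊓ W = W := Submodule.eq_of_le_of_finrank_eq inf_le_right (by omega)
      rw [← e1, e2]
    exact ⟨fun _ => U, rfl, hUW ▸ rfl, fun _ => hU, fun i => i.elim0,
      fun _ => le_sup_left⟩
  | succ n ih =>
    intro U W hU hW hd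
    by_cases hUW : U = W
    · subst hUW
      refine ⟨fun _ => U, rfl, rfl, fun _ => hU, fun i => ?_, fun _ => le_sup_left⟩
      show k - 1 ≤ Module.finrank K ↥(U ⊓ U)
      have h1 : Module.finrank K ↥(U ⊓ U) ≤ Module.finrank K U :=
        Submodule.finrank_mono inf_le_left
      have h2 : Module.finrank K U ≤ Module.finrank K ↥(U ⊓ U) :=
        Submodule.finrank_mono (le_inf le_rfl le_rfl)
      omega
    · have hle : Module.finrank K ↥(U ⊓ W) ≤ k := hU ▸ Submodule.finrank_mono inf_le_left
      have hlt : Module.finrank K ↥(U ⊓ W) < k := by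
        rcases hle.lt_or_eq with h | h
        · exact h
        · exfalso
          apply hUW
          have e1 : U ⊓ W = U := Submodule.eq_of_le_of_finrank_eq inf_le_left (by rw [h, hU])
          have e2 : U ≤ W := e1 ▸ inf_le_right
          exact Submodule.eq_of_le_of_finrank_eq e2 (by rw [hU, hW])
      -- pick w ∈ W \ U
      have hWU : ¬ W ≤ U := by
        intro h
        have := Submodule.finrank_mono (le_inf h le_rfl : W ≤ U ⊓ W)
        omega
      obtain ⟨w, hwW, hwU⟩ := SetLike.not_le_iff_exists.mp hWU
      -- hyperplane H with U ⊓ W ≤ H ≤ U, finrank H = k - 1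
      obtain ⟨H, hH1, hH2, hH3⟩ := exists_between_finrank
        (k - 1 - Module.finrank K ↥(U ⊓ W)) (U ⊓ W) U inf_le_left (by omega)
      have hHrank : Module.finrank K H = k - 1 := by omega
      have hwH : w ∉ H := fun h => hwU (hH2 h)
      set U' : Submodule K V := H ⊔ (K ∙ w) with hU'
      have hU'rank : Module.finrank K U' = k := by
        rw [hU', sup_span_singleton_finrank H hwH]; omega
      have hUW' : U ⊓ W ≤ U' ⊓ W := le_inf (le_trans hH1 le_sup_left) inf_le_right
      have hwUW : w ∉ U ⊓ W := fun h => hwU h.1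
      have hwU' : w ∈ U' := Submodule.mem_sup_right (Submodule.mem_span_singleton_self w)
      have hsub : (U ⊓ W) ⊔ (K ∙ w) ≤ U' ⊓ W :=
        sup_le hUW' (le_inf ((span_singleton_le_iff_mem w U').mpr hwU')
          ((span_singleton_le_iff_mem w W).mpr hwW))
      have hrank' : Module.finrank K ↥(U ⊓ W) + 1 ≤ Module.finrank K ↥(U' ⊓ W) := by
        have := sup_span_singleton_finrank (U ⊓ W) hwUW
        have := Submodule.finrank_mono hsub
        omega
      obtain ⟨y, hy0, hylast, hyrank, hycons, hyle⟩ := ih U' W hU'rank hW (by omega)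
      refine ⟨Fin.cons U y, Fin.cons_zero _ _, ?_, ?_, ?_, ?_⟩
      · rw [show (Fin.last (n + 1)) = (Fin.last n).succ from rfl, Fin.cons_succ]
        exact hylast
      · intro i
        refine Fin.cases ?_ ?_ i
        · exact hU
        · intro j; rw [Fin.cons_succ]; exact hyrank j
      · intro i
        refine Fin.cases ?_ ?_ i
        · have h0 : (Fin.cons U y : Fin (n + 2) → Submodule K V) (Fin.castSucc 0) = U := rfl
          have h1 : (Fin.cons U y : Fin (n + 2) → Submodule K V) (Fin.succ 0) = y 0 := rfl
          rw [h0, h1, hy0]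
          have hHle : H ≤ U ⊓ U' := le_inf hH2 le_sup_left
          have := Submodule.finrank_mono hHle
          omega
        · intro j
          have h0 : (Fin.cons U y : Fin (n + 2) → Submodule K V) (Fin.castSucc j.succ)
              = y j.castSucc := by
            rw [show Fin.castSucc j.succ = Fin.succ j.castSucc from rfl, Fin.cons_succ]
          have h1 : (Fin.cons U y : Fin (n + 2) → Submodule K V) (Fin.succ j.succ)
              = y j.succ := rfl
          rw [h0, h1]
          exact hycons j
      · intro i
        have hU'W : U' ⊔ W ≤ U ⊔ W :=
          sup_le (sup_le (le_trans hH2 le_sup_left)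
            (le_trans ((span_singleton_le_iff_mem w W).mpr hwW) le_sup_right)) le_sup_right
        refine Fin.cases ?_ ?_ i
        · exact le_sup_left
        · intro j; rw [Fin.cons_succ]; exact le_trans (hyle j) hU'W

/-- Any two `k`-dimensional subspaces `U`, `W` of `V` are connected by a
chain `x_0 = U, x_1, ..., x_k = W` of `k`-dimensional subspaces with
`dim(x_i ∩ x_{i+1}) ≥ k - 1` for consecutive members, and with every `x_i ⊆ U + W`. -/
theorem stmt4 (K : Type*) [Field K] (V : Type*) [AddCommGroup V] [Module K V]
    [FiniteDimensional K V] (k : ℕ) (hk : 1 ≤ k)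
    (U W : Submodule K V)
    (hU : Module.finrank K U = k) (hW : Module.finrank K W = k) :
    ∃ x : Fin (k + 1) → Submodule K V,
      x 0 = U ∧ x (Fin.last k) = W ∧
      (∀ i, Module.finrank K (x i) = k) ∧
      (∀ i : Fin k, k - 1 ≤ Module.finrank K ↥(x i.castSucc ⊓ x i.succ)) ∧
      ∀ i, x i ≤ U ⊔ W := by
  exact chain_aux k hk k U W hU hW (by omega)
end
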